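/- The polynomial f(t) = t^5 + t^4 − 3t^3 − 2t^2 − t − 1 has exactly three real roots. -/

import Mathlib

noncomputable def F : ℝ → ℝ := fun x => x ^ 5 + x ^ 4 - 3 * x ^ 3 - 2 * x ^ 2 - x - 1

lemma F_cont : Continuous F := by unfold F; continuity

lemma F_deriv (x : ℝ) : HasDerivAt F (5 * x ^ 4 + 4 * x ^ 3 - 9 * x ^ 2 - 4 * x - 1) x := by
  have h : HasDerivAt (fun x : ℝ => x ^ 5 + x ^ 4 - 3 * x ^ 3 - 2 * x ^ 2 - x - 1)
      (5 * x ^ 4 + 4 * x ^ 3 - 9 * x ^ 2 - 4 * x - 1) x := by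
    have := ((hasDerivAt_pow 5 x).add (hasDerivAt_pow 4 x)).sub
      (((hasDerivAt_pow 3 x).const_mul 3))
    have := (this.sub ((hasDerivAt_pow 2 x).const_mul 2)).sub (hasDerivAt_id x)
    have h2 := this.sub_const 1
    convert h2 using 1
    · rfl
    · rfl
    · rfl
    · ring
  exact h

lemma deriv_pos_left {x : ℝ} (hx : x ≤ -1.7) : 0 < 5 * x ^ 4 + 4 * x ^ 3 - 9 * x ^ 2 - 4 * x - 1 := by
  nlinarith [sq_nonneg (x + 1.7), sq_nonneg (x^2 + 1.7*x), sq_nonneg x, sq_nonneg (x+2), sq_nonneg (x^2-1)]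

lemma deriv_neg_mid {x : ℝ} (h1 : -1.6 ≤ x) (h2 : x ≤ 1.2) :
    5 * x ^ 4 + 4 * x ^ 3 - 9 * x ^ 2 - 4 * x - 1 < 0 := by
  nlinarith [mul_nonneg (sub_nonneg.2 h1) (sub_nonneg.2 h2), sq_nonneg (x + 0.2), sq_nonneg x, sq_nonneg (x-1), sq_nonneg (x+1), mul_nonneg (mul_nonneg (sub_nonneg.2 h1) (sub_nonneg.2 h2)) (sq_nonneg x)]

lemma deriv_pos_right {x : ℝ} (hx : 1.3 ≤ x) : 0 < 5 * x ^ 4 + 4 * x ^ 3 - 9 * x ^ 2 - 4 * x - 1 := by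
  nlinarith [sq_nonneg (x - 1.3), sq_nonneg (x^2 - 1.3*x), sq_nonneg x]

lemma F_pos_gap1 {x : ℝ} (h1 : -1.7 ≤ x) (h2 : x ≤ -1.6) : 0 < F x := by
  unfold F
  nlinarith [mul_nonneg (sub_nonneg.2 h1) (sub_nonneg.2 h2), sq_nonneg (x+1.65), mul_nonneg (mul_nonneg (sub_nonneg.2 h1) (sub_nonneg.2 h2)) (sq_nonneg (x+1.65)), mul_nonneg (mul_nonneg (sub_nonneg.2 h1) (sub_nonneg.2 h2)) (sq_nonneg x)]

lemma F_neg_gap2 {x : ℝ} (h1 : 1.2 ≤ x) (h2 : x ≤ 1.3) : F x < 0 := by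
  unfold F
  nlinarith [mul_nonneg (sub_nonneg.2 h1) (sub_nonneg.2 h2), sq_nonneg x, mul_nonneg (mul_nonneg (sub_nonneg.2 h1) (sub_nonneg.2 h2)) (sq_nonneg x)]

lemma F_mono_left : StrictMonoOn F (Set.Iic (-1.7)) := by
  apply strictMonoOn_of_deriv_pos (convex_Iic _) (F_cont.continuousOn)
  intro x hx
  rw [interior_Iic] at hx
  rw [(F_deriv x).deriv]
  exact deriv_pos_left hx.le

lemma F_anti_mid : StrictAntiOn F (Set.Icc (-1.6) 1.2) := by
  apply strictAntiOn_of_deriv_neg (convex_Icc _ _) (F_cont.continuousOn)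
  intro x hx
  rw [interior_Icc] at hx
  rw [(F_deriv x).deriv]
  exact deriv_neg_mid hx.1.le hx.2.le

lemma F_mono_right : StrictMonoOn F (Set.Ici 1.3) := by
  apply strictMonoOn_of_deriv_pos (convex_Ici _) (F_cont.continuousOn)
  intro x hx
  rw [interior_Ici] at hx
  rw [(F_deriv x).deriv]
  exact deriv_pos_right hx.le

theorem stmt16 :
    ({x : ℝ | x ^ 5 + x ^ 4 - 3 * x ^ 3 - 2 * x ^ 2 - x - 1 = 0}).ncard = 3 := by
  have hS : {x : ℝ | x ^ 5 + x ^ 4 - 3 * x ^ 3 - 2 * x ^ 2 - x - 1 = 0} = {x : ℝ | F x = 0} := rfl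
  rw [hS]
  -- root a in [-3,-2]
  obtain ⟨a, ha, hfa⟩ : ∃ a ∈ Set.Icc (-3 : ℝ) (-2), F a = 0 := by
    have h := intermediate_value_Icc (by norm_num : (-3:ℝ) ≤ -2) (F_cont.continuousOn)
    have h0 : (0:ℝ) ∈ Set.Icc (F (-3)) (F (-2)) := by
      constructor <;> unfold F <;> norm_num
    obtain ⟨a, ha, hfa⟩ := h h0
    exact ⟨a, ha, hfa⟩
  -- root b in [-1,0]
  obtain ⟨b, hb, hfb⟩ : ∃ b ∈ Set.Icc (-1 : ℝ) 0, F b = 0 := by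
    have h := intermediate_value_Icc' (by norm_num : (-1:ℝ) ≤ 0) (F_cont.continuousOn)
    have h0 : (0:ℝ) ∈ Set.Icc (F 0) (F (-1)) := by
      constructor <;> unfold F <;> norm_num
    obtain ⟨b, hb, hfb⟩ := h h0
    exact ⟨b, hb, hfb⟩
  -- root c in [1.3,2]
  obtain ⟨c, hc, hfc⟩ : ∃ c ∈ Set.Icc (1.3 : ℝ) 2, F c = 0 := by
    have h := intermediate_value_Icc (by norm_num : (1.3:ℝ) ≤ 2) (F_cont.continuousOn)
    have h0 : (0:ℝ) ∈ Set.Icc (F 1.3) (F 2) := by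
      constructor
      · exact (F_neg_gap2 (by norm_num) (le_refl (1.3:ℝ))).le
      · unfold F; norm_num
    obtain ⟨c, hc, hfc⟩ := h h0
    exact ⟨c, hc, hfc⟩
  have hset : {x : ℝ | F x = 0} = {a, b, c} := by
    ext x
    simp only [Set.mem_setOf_eq, Set.mem_insert_iff, Set.mem_singleton_iff]
    constructor
    · intro hx
      rcases le_or_gt x (-1.7) with h1 | h1
      · left
        exact F_mono_left.injOn h1 (Set.mem_Iic.2 (ha.2.trans (by norm_num))) (by rw [hx, hfa])
      rcases lt_or_ge x (-1.6) with h2 | h2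
      · exact absurd hx (ne_of_gt (F_pos_gap1 h1.le h2.le))
      rcases le_or_gt x 1.2 with h3 | h3
      · right; left
        exact F_anti_mid.injOn ⟨h2, h3⟩ ⟨by linarith [hb.1], by linarith [hb.2]⟩ (by rw [hx, hfb])
      rcases lt_or_ge x 1.3 with h4 | h4
      · exact absurd hx (ne_of_lt (F_neg_gap2 h3.le h4.le))
      · right; right
        exact F_mono_right.injOn h4 hc.1 (by rw [hx, hfc])
    · rintro (rfl | rfl | rfl) <;> assumption
  rw [hset]
  have hab : a ≠ b := by intro h; rw [h] at ha; linarith [ha.2, hb.1]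
  have hac : a ≠ c := by intro h; rw [h] at ha; have := hc.1; linarith [ha.2]
  have hbc : b ≠ c := by intro h; rw [h] at hb; have := hc.1; linarith [hb.2]
  rw [Set.ncard_insert_of_notMem (by simp [hab, hac]),
      Set.ncard_insert_of_notMem (by simp [hbc]), Set.ncard_singleton]
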